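/- Let f_w be an l-layer MPGNN (l ≥ 2) on graphs with n nodes satisfying the following: nonzero weights with ‖U_i‖₂ ≤ M₁ for i ∈ [l−1] and ‖W_i‖₂ ≤ M₂ for i ∈ [l], and entrywise L-Lipschitz nonlinearities φ_k, ρ_k, ψ_k with φ_k(0)=ρ_k(0)=ψ_k(0)=0. Let ΔW_1,…,ΔW_l and ΔU_1,…,ΔU_{l−1} be perturbation matrices of matching sizes, let η = max over i of the ratios ‖ΔU_i‖₂/‖U_i‖₂ and ‖ΔW_i‖₂/‖W_i‖₂, and assume η ≤ 1/l. Let ε > 0, let G = (X, A) be a graph with ‖X‖₂ ≤ B, suppose ‖P_{G'}‖₂ ≤ P̄ for every G' in the ε-attack set of G, and set τ = L³ M₂ P̄. Then for any pair of classes i, j ∈ [K]: if τ = 1, then |RM(f_{w+Δw}(G); i, j) − RM(f_w(G); i, j)| ≤ 2e · η · L (B+ε) M₁ M₂ · (l+1)²; and if τ ≠ 1, then |RM(f_{w+Δw}(G); i, j) − RM(f_w(G); i, j)| ≤ 2e · η · l · L (B+ε) M₁ M₂ · (τ^{l−1} − 1)/(τ − 1). -/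

import Mathlib

open MeasureTheory Matrix Finset

noncomputable section

/-- Spectral norm of a real matrix: the operator norm induced by Euclidean vector norms. -/
def specNorm {m n : Type*} [Fintype m] [Fintype n] [DecidableEq n] (A : Matrix m n ℝ) : ℝ :=
  ‖LinearMap.toContinuousLinearMap (Matrix.toEuclideanLin A)‖

/-- Frobenius norm of a real matrix. -/
def frobNorm {m n : Type*} [Fintype m] [Fintype n] (A : Matrix m n ℝ) : ℝ :=
  Real.sqrt (∑ i, ∑ j, (A i j) ^ 2)

/-- Euclidean norm of a finite real vector. -/
def euclNorm {n : Type*} [Fintype n] (v : n → ℝ) : ℝ :=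
  Real.sqrt (∑ i, (v i) ^ 2)

/-- Node representations of an MPGNN:
`H_0 = 0`, `H_{k+1} = φ_{k+1}(X U_{k+1} + ρ_{k+1}(P ψ_{k+1}(H_k) W_{k+1}))`
(we index weights and nonlinearities from `0`, so `W k`, `U k`, `φ k`, `ρ k`, `ψ k`
are the paper's `W_{k+1}`, `U_{k+1}`, `φ_{k+1}`, `ρ_{k+1}`, `ψ_{k+1}`). -/
def mpgnnRep {n : ℕ} (d : ℕ → ℕ) (φ ρ ψ : ℕ → ℝ → ℝ)
    (W : ∀ k : ℕ, Matrix (Fin (d k)) (Fin (d (k + 1))) ℝ)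
    (U : ∀ k : ℕ, Matrix (Fin (d 0)) (Fin (d (k + 1))) ℝ)
    (P : Matrix (Fin n) (Fin n) ℝ) (X : Matrix (Fin n) (Fin (d 0)) ℝ) :
    (k : ℕ) → Matrix (Fin n) (Fin (d k)) ℝ
  | 0 => 0
  | (k + 1) =>
      (X * U k + (P * (mpgnnRep d φ ρ ψ W U P X k).map (ψ k) * W k).map (ρ k)).map (φ k)

/-- Output (readout) of an `l`-layer MPGNN: `f_w(G) = H_l = (1/n) 1_n H_{l-1} W_l`. -/
def mpgnnOut {n : ℕ} (d : ℕ → ℕ) (φ ρ ψ : ℕ → ℝ → ℝ)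
    (W : ∀ k : ℕ, Matrix (Fin (d k)) (Fin (d (k + 1))) ℝ)
    (U : ∀ k : ℕ, Matrix (Fin (d 0)) (Fin (d (k + 1))) ℝ)
    (P : Matrix (Fin n) (Fin n) ℝ) (X : Matrix (Fin n) (Fin (d 0)) ℝ) :
    (l : ℕ) → Fin (d l) → ℝ
  | 0 => fun _ => 0
  | (l + 1) => fun j => (n : ℝ)⁻¹ * ∑ i, (mpgnnRep d φ ρ ψ W U P X l * W l) i j

/-- The `ε`-attack set of a graph `G = (X, A)`: the node features may be moved by at most
`ε` in spectral norm, and the adjacency matrix may be replaced by any symmetric 0/1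
matrix. -/
def attack {n h₀ : ℕ} (ε : ℝ) (G : Matrix (Fin n) (Fin h₀) ℝ × Matrix (Fin n) (Fin n) ℝ) :
    Set (Matrix (Fin n) (Fin h₀) ℝ × Matrix (Fin n) (Fin n) ℝ) :=
  {G' | specNorm (G'.1 - G.1) ≤ ε ∧ G'.2.IsSymm ∧ ∀ i j, G'.2 i j = 0 ∨ G'.2 i j = 1}

/-- The maximal relative size `η` of the perturbation: the maximum over all layers of
`‖ΔU_i‖₂/‖U_i‖₂` and `‖ΔW_i‖₂/‖W_i‖₂`. -/
def etaRatio (l : ℕ) (d : ℕ → ℕ)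
    (W ΔW : ∀ k : ℕ, Matrix (Fin (d k)) (Fin (d (k + 1))) ℝ)
    (U ΔU : ∀ k : ℕ, Matrix (Fin (d 0)) (Fin (d (k + 1))) ℝ) : ℝ :=
  sSup ({x | ∃ k, k < l ∧ specNorm (ΔW k) / specNorm (W k) = x} ∪
        {x | ∃ k, k < l - 1 ∧ specNorm (ΔU k) / specNorm (U k) = x})

/-- The robust margin operator of a pair of classes `(i, j)` for an MPGNN under
`ε`-attacks, where `Pfun` computes the diffusion matrix `P_{G'}` from the adjacency
matrix: `RM(f_w(G); i, j) = inf_{G' ∈ δ(G)} (f_w(G')_i - f_w(G')_j)`. -/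
def mpgnnRobustMarginPair {n : ℕ} (l : ℕ) (d : ℕ → ℕ) (φ ρ ψ : ℕ → ℝ → ℝ)
    (W : ∀ k : ℕ, Matrix (Fin (d k)) (Fin (d (k + 1))) ℝ)
    (U : ∀ k : ℕ, Matrix (Fin (d 0)) (Fin (d (k + 1))) ℝ)
    (Pfun : Matrix (Fin n) (Fin n) ℝ → Matrix (Fin n) (Fin n) ℝ) (ε : ℝ)
    (G : Matrix (Fin n) (Fin (d 0)) ℝ × Matrix (Fin n) (Fin n) ℝ) (i j : Fin (d l)) : ℝ :=
  sInf {x | ∃ G' ∈ attack ε G,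
    mpgnnOut d φ ρ ψ W U (Pfun G'.2) G'.1 l i -
      mpgnnOut d φ ρ ψ W U (Pfun G'.2) G'.1 l j = x}


section AuxNormLemmas
variable {m n p : Type*} [Fintype m] [Fintype n] [Fintype p]

lemma euclNorm_eq_norm (v : n → ℝ) :
    euclNorm v = ‖((WithLp.equiv 2 (n → ℝ)).symm v : EuclideanSpace ℝ n)‖ := by
  rw [EuclideanSpace.norm_eq]
  simp [euclNorm, Real.norm_eq_abs, sq_abs]

lemma euclNorm_nonneg (v : n → ℝ) : 0 ≤ euclNorm v := Real.sqrt_nonneg _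

lemma frobNorm_nonneg (A : Matrix m n ℝ) : 0 ≤ frobNorm A := Real.sqrt_nonneg _

lemma specNorm_nonneg [DecidableEq n] (A : Matrix m n ℝ) : 0 ≤ specNorm A := norm_nonneg _

lemma abs_dotProduct_le (v w : n → ℝ) : |v ⬝ᵥ w| ≤ euclNorm v * euclNorm w := by
  rw [euclNorm_eq_norm, euclNorm_eq_norm]
  have h := abs_real_inner_le_norm ((WithLp.equiv 2 (n → ℝ)).symm v) ((WithLp.equiv 2 (n → ℝ)).symm w)
  rw [PiLp.inner_apply] at h
  simpa [dotProduct, RCLike.inner_apply, mul_comm] using h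

lemma euclNorm_mulVec_le [DecidableEq n] (A : Matrix m n ℝ) (v : n → ℝ) :
    euclNorm (A *ᵥ v) ≤ specNorm A * euclNorm v := by
  have h := (LinearMap.toContinuousLinearMap (Matrix.toEuclideanLin A)).le_opNorm
      ((WithLp.equiv 2 (n → ℝ)).symm v)
  rw [euclNorm_eq_norm, euclNorm_eq_norm]
  simpa [Matrix.toEuclideanLin_apply, specNorm] using h


lemma euclNorm_sq (v : n → ℝ) : euclNorm v ^ 2 = ∑ i, (v i) ^ 2 :=
  Real.sq_sqrt (by positivity)

lemma euclNorm_vecMul_le [DecidableEq n] (A : Matrix m n ℝ) (v : m → ℝ) :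
    euclNorm (v ᵥ* A) ≤ specNorm A * euclNorm v := by
  set u := v ᵥ* A with hu
  have key : euclNorm u ^ 2 = v ⬝ᵥ (A *ᵥ u) := by
    have h1 : ∀ c, (u c) ^ 2 = ∑ r, v r * (A r c * u c) := by
      intro c
      have : u c = ∑ r, v r * A r c := by simp [hu, vecMul, dotProduct]
      rw [pow_two]
      conv_lhs => rw [this]
      rw [Finset.sum_mul]
      exact Finset.sum_congr rfl fun r _ => by rw [← this]; ring
    rw [euclNorm_sq]
    calc ∑ c, (u c) ^ 2 = ∑ c, ∑ r, v r * (A r c * u c) :=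
          Finset.sum_congr rfl fun c _ => h1 c
      _ = ∑ r, ∑ c, v r * (A r c * u c) := Finset.sum_comm
      _ = v ⬝ᵥ (A *ᵥ u) := by
          simp [dotProduct, mulVec, Finset.mul_sum]
  rcases eq_or_lt_of_le (euclNorm_nonneg u) with h0 | h0
  · rw [← h0]
    exact mul_nonneg (specNorm_nonneg _) (euclNorm_nonneg _)
  · have h1 : euclNorm u ^ 2 ≤ euclNorm v * (specNorm A * euclNorm u) := by
      calc euclNorm u ^ 2 = v ⬝ᵥ (A *ᵥ u) := key
        _ ≤ |v ⬝ᵥ (A *ᵥ u)| := le_abs_self _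
        _ ≤ euclNorm v * euclNorm (A *ᵥ u) := abs_dotProduct_le _ _
        _ ≤ euclNorm v * (specNorm A * euclNorm u) := by
            exact mul_le_mul_of_nonneg_left (euclNorm_mulVec_le A u) (euclNorm_nonneg v)
    nlinarith [euclNorm_nonneg v, specNorm_nonneg A]

lemma frobNorm_sq (A : Matrix m n ℝ) : frobNorm A ^ 2 = ∑ i, ∑ j, (A i j) ^ 2 :=
  Real.sq_sqrt (by positivity)

lemma frobNorm_le_of_sq_le_sq (A : Matrix m n ℝ) (c : ℝ) (hc : 0 ≤ c)
    (h : ∑ i, ∑ j, (A i j) ^ 2 ≤ c ^ 2) : frobNorm A ≤ c := by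
  rw [frobNorm]
  calc Real.sqrt (∑ i, ∑ j, (A i j) ^ 2) ≤ Real.sqrt (c ^ 2) := Real.sqrt_le_sqrt h
    _ = c := Real.sqrt_sq hc

lemma frobNorm_mul_le_right [DecidableEq n] [DecidableEq p] (A : Matrix m n ℝ) (B : Matrix n p ℝ) :
    frobNorm (A * B) ≤ frobNorm A * specNorm B := by
  apply frobNorm_le_of_sq_le_sq _ _ (mul_nonneg (frobNorm_nonneg _) (specNorm_nonneg _))
  have hrow : ∀ i, ∑ j, ((A * B) i j) ^ 2 ≤ (specNorm B * euclNorm (A i)) ^ 2 := by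
    intro i
    have : (A * B) i = (A i) ᵥ* B := by
      ext j; simp [Matrix.mul_apply, vecMul, dotProduct]
    rw [this, ← euclNorm_sq]
    have := euclNorm_vecMul_le B (A i)
    nlinarith [euclNorm_nonneg ((A i) ᵥ* B), euclNorm_nonneg (A i), specNorm_nonneg B]
  calc ∑ i, ∑ j, ((A * B) i j) ^ 2 ≤ ∑ i, (specNorm B * euclNorm (A i)) ^ 2 :=
        Finset.sum_le_sum fun i _ => hrow i
    _ = specNorm B ^ 2 * ∑ i, euclNorm (A i) ^ 2 := by
        rw [Finset.mul_sum]; congr 1; ext i; ring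
    _ = specNorm B ^ 2 * ∑ i, ∑ j, (A i j) ^ 2 := by
        congr 1; exact Finset.sum_congr rfl fun i _ => euclNorm_sq (A i)
    _ = (frobNorm A * specNorm B) ^ 2 := by rw [← frobNorm_sq]; ring

lemma frobNorm_mul_le_left [DecidableEq n] [DecidableEq p] (A : Matrix m n ℝ) (B : Matrix n p ℝ) :
    frobNorm (A * B) ≤ specNorm A * frobNorm B := by
  apply frobNorm_le_of_sq_le_sq _ _ (mul_nonneg (specNorm_nonneg _) (frobNorm_nonneg _))
  have hcol : ∀ j, ∑ i, ((A * B) i j) ^ 2 ≤ (specNorm A * euclNorm (fun k => B k j)) ^ 2 := by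
    intro j
    have h1 : ∀ i, (A * B) i j = (A *ᵥ (fun k => B k j)) i := by
      intro i; simp [Matrix.mul_apply, mulVec, dotProduct]
    have h2 : ∑ i, ((A * B) i j) ^ 2 = euclNorm (A *ᵥ (fun k => B k j)) ^ 2 := by
      rw [euclNorm_sq]; exact Finset.sum_congr rfl fun i _ => by rw [h1 i]
    rw [h2]
    have := euclNorm_mulVec_le A (fun k => B k j)
    nlinarith [euclNorm_nonneg (A *ᵥ (fun k => B k j)), euclNorm_nonneg (fun k => B k j),
      specNorm_nonneg A]
  calc ∑ i, ∑ j, ((A * B) i j) ^ 2 = ∑ j, ∑ i, ((A * B) i j) ^ 2 := Finset.sum_comm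
    _ ≤ ∑ j, (specNorm A * euclNorm (fun k => B k j)) ^ 2 := Finset.sum_le_sum fun j _ => hcol j
    _ = specNorm A ^ 2 * ∑ j, euclNorm (fun k => B k j) ^ 2 := by
        rw [Finset.mul_sum]; congr 1; ext j; ring
    _ = specNorm A ^ 2 * ∑ j, ∑ i, (B i j) ^ 2 := by
        congr 1; exact Finset.sum_congr rfl fun j _ => euclNorm_sq _
    _ = (specNorm A * frobNorm B) ^ 2 := by
        rw [← Finset.sum_comm, ← frobNorm_sq]; ring

lemma frobNorm_eq_norm (A : Matrix m n ℝ) :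
    frobNorm A =
      ‖((WithLp.equiv 2 (m × n → ℝ)).symm (fun q => A q.1 q.2) : EuclideanSpace ℝ (m × n))‖ := by
  rw [EuclideanSpace.norm_eq, frobNorm]
  congr 1
  simp [Fintype.sum_prod_type, Real.norm_eq_abs, sq_abs]

lemma frobNorm_add_le (A B : Matrix m n ℝ) : frobNorm (A + B) ≤ frobNorm A + frobNorm B := by
  rw [frobNorm_eq_norm, frobNorm_eq_norm, frobNorm_eq_norm]
  have : ((WithLp.equiv 2 (m × n → ℝ)).symm (fun q => (A + B) q.1 q.2) : EuclideanSpace ℝ (m × n)) =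
      ((WithLp.equiv 2 (m × n → ℝ)).symm (fun q => A q.1 q.2) : EuclideanSpace ℝ (m × n)) +
      ((WithLp.equiv 2 (m × n → ℝ)).symm (fun q => B q.1 q.2) : EuclideanSpace ℝ (m × n)) := by
    ext q; simp [Matrix.add_apply]
  rw [this]
  exact norm_add_le _ _

lemma frobNorm_map_sub_le (A B : Matrix m n ℝ) (f : ℝ → ℝ) (L : ℝ) (hL : 0 ≤ L)
    (hf : ∀ x y, |f x - f y| ≤ L * |x - y|) :
    frobNorm (A.map f - B.map f) ≤ L * frobNorm (A - B) := by
  apply frobNorm_le_of_sq_le_sq _ _ (mul_nonneg hL (frobNorm_nonneg _))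
  have h : ∀ i j, ((A.map f - B.map f) i j) ^ 2 ≤ L ^ 2 * ((A - B) i j) ^ 2 := by
    intro i j
    have h1 := hf (A i j) (B i j)
    have h2 : |f (A i j) - f (B i j)| ^ 2 ≤ (L * |A i j - B i j|) ^ 2 := by
      apply pow_le_pow_left₀ (abs_nonneg _) h1
    simpa [Matrix.sub_apply, Matrix.map_apply, sq_abs, mul_pow] using h2
  calc ∑ i, ∑ j, ((A.map f - B.map f) i j) ^ 2 ≤ ∑ i, ∑ j, L ^ 2 * ((A - B) i j) ^ 2 :=
        Finset.sum_le_sum fun i _ => Finset.sum_le_sum fun j _ => h i j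
    _ = L ^ 2 * ∑ i, ∑ j, ((A - B) i j) ^ 2 := by rw [Finset.mul_sum]; congr 1; ext i; rw [Finset.mul_sum]
    _ = (L * frobNorm (A - B)) ^ 2 := by rw [← frobNorm_sq]; ring

lemma frobNorm_map_le (A : Matrix m n ℝ) (f : ℝ → ℝ) (L : ℝ) (hL : 0 ≤ L) (hf0 : f 0 = 0)
    (hf : ∀ x y, |f x - f y| ≤ L * |x - y|) :
    frobNorm (A.map f) ≤ L * frobNorm A := by
  have := frobNorm_map_sub_le A 0 f L hL hf
  have hz : (0 : Matrix m n ℝ).map f = 0 := by ext i j; simp [Matrix.map_apply, hf0]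
  rw [hz, sub_zero, sub_zero] at this
  exact this

lemma euclNorm_single [DecidableEq m] (i : m) : euclNorm (Pi.single i (1:ℝ)) = 1 := by
  rw [euclNorm]
  rw [Finset.sum_eq_single i]
  · simp
  · intro b _ hb; simp [Pi.single_apply, hb]
  · intro h; exact absurd (Finset.mem_univ i) h

lemma euclNorm_row_le [DecidableEq m] [DecidableEq n] (A : Matrix m n ℝ) (i : m) :
    euclNorm (A i) ≤ specNorm A := by
  have h1 : A i = (Pi.single i (1:ℝ)) ᵥ* A := by
    ext j; simp [vecMul, dotProduct, Pi.single_apply]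
  rw [h1]
  have := euclNorm_vecMul_le A (Pi.single i (1:ℝ))
  rwa [euclNorm_single, mul_one] at this

lemma frobNorm_le_sqrt_card [DecidableEq m] [DecidableEq n] (A : Matrix m n ℝ) :
    frobNorm A ≤ Real.sqrt (Fintype.card m) * specNorm A := by
  apply frobNorm_le_of_sq_le_sq _ _ (mul_nonneg (Real.sqrt_nonneg _) (specNorm_nonneg _))
  have h : ∀ i, ∑ j, (A i j) ^ 2 ≤ specNorm A ^ 2 := by
    intro i
    have h1 := euclNorm_row_le A i
    have h2 := euclNorm_sq (A i)
    nlinarith [euclNorm_nonneg (A i), specNorm_nonneg A]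
  calc ∑ i, ∑ j, (A i j) ^ 2 ≤ ∑ _i : m, specNorm A ^ 2 := Finset.sum_le_sum fun i _ => h i
    _ = (Fintype.card m) * specNorm A ^ 2 := by
        rw [Finset.sum_const, nsmul_eq_mul, Finset.card_univ]
    _ = (Real.sqrt (Fintype.card m) * specNorm A) ^ 2 := by
        rw [mul_pow, Real.sq_sqrt (Nat.cast_nonneg _)]

lemma abs_col_sum_le (A : Matrix m n ℝ) (c : n) :
    |∑ i, A i c| ≤ Real.sqrt (Fintype.card m) * frobNorm A := by
  have h1 : ∑ i, A i c = (fun _ : m => (1:ℝ)) ⬝ᵥ (fun i => A i c) := by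
    simp [dotProduct]
  rw [h1]
  have h2 := abs_dotProduct_le (fun _ : m => (1:ℝ)) (fun i => A i c)
  have h3 : euclNorm (fun _ : m => (1:ℝ)) = Real.sqrt (Fintype.card m) := by
    rw [euclNorm]
    congr 1
    rw [Finset.sum_const, nsmul_eq_mul, Finset.card_univ]
    simp
  have h4 : euclNorm (fun i => A i c) ≤ frobNorm A := by
    apply Real.sqrt_le_sqrt
    calc ∑ i, (A i c) ^ 2 ≤ ∑ i, ∑ j, (A i j) ^ 2 := by
          apply Finset.sum_le_sum
          intro i _
          exact Finset.single_le_sum (f := fun j => (A i j)^2) (fun j _ => sq_nonneg _) (Finset.mem_univ c)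
    _ = ∑ i, ∑ j, (A i j) ^ 2 := rfl
  calc |(fun _ : m => (1:ℝ)) ⬝ᵥ (fun i => A i c)| ≤
        euclNorm (fun _ : m => (1:ℝ)) * euclNorm (fun i => A i c) := h2
    _ ≤ Real.sqrt (Fintype.card m) * frobNorm A := by
        rw [h3]
        exact mul_le_mul_of_nonneg_left h4 (Real.sqrt_nonneg _)


lemma specNorm_add_le [DecidableEq n] (A B : Matrix m n ℝ) : specNorm (A + B) ≤ specNorm A + specNorm B := by
  unfold specNorm
  rw [map_add, map_add]
  exact norm_add_le _ _

lemma specNorm_pos [DecidableEq n] (A : Matrix m n ℝ) (hA : A ≠ 0) : 0 < specNorm A := by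
  unfold specNorm
  rw [norm_pos_iff]
  intro h
  apply hA
  have h2 : Matrix.toEuclideanLin A = 0 := by
    have := LinearMap.coe_toContinuousLinearMap (Matrix.toEuclideanLin A)
    rw [h] at this
    rw [← this]
    rfl
  exact (LinearEquiv.map_eq_zero_iff Matrix.toEuclideanLin).mp h2
end AuxNormLemmas

section AuxMPGNN
variable {m' n' p' : Type*} [Fintype m'] [Fintype n'] [Fintype p']

lemma frobNorm_zero : frobNorm (0 : Matrix m' n' ℝ) = 0 := by
  simp [frobNorm]

lemma rep_frob_le {n : ℕ} (d : ℕ → ℕ) (φ ρ ψ : ℕ → ℝ → ℝ)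
    (W : ∀ k : ℕ, Matrix (Fin (d k)) (Fin (d (k + 1))) ℝ)
    (U : ∀ k : ℕ, Matrix (Fin (d 0)) (Fin (d (k + 1))) ℝ)
    (P : Matrix (Fin n) (Fin n) ℝ) (X : Matrix (Fin n) (Fin (d 0)) ℝ)
    (lb : ℕ) (L m1 m2 Pb β : ℝ)
    (hL : 0 ≤ L) (hm1 : 0 ≤ m1) (hm2 : 0 ≤ m2) (hPb : 0 ≤ Pb) (hβ : 0 ≤ β)
    (hP : specNorm P ≤ Pb) (hX : specNorm X ≤ β)
    (hLipφ : ∀ k, k < lb → ∀ x y : ℝ, |φ k x - φ k y| ≤ L * |x - y|)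
    (hLipρ : ∀ k, k < lb → ∀ x y : ℝ, |ρ k x - ρ k y| ≤ L * |x - y|)
    (hLipψ : ∀ k, k < lb → ∀ x y : ℝ, |ψ k x - ψ k y| ≤ L * |x - y|)
    (hφ0 : ∀ k, k < lb → φ k 0 = 0) (hρ0 : ∀ k, k < lb → ρ k 0 = 0)
    (hψ0 : ∀ k, k < lb → ψ k 0 = 0)
    (hU : ∀ k, k < lb → specNorm (U k) ≤ m1) (hW : ∀ k, k < lb → specNorm (W k) ≤ m2) :
    ∀ k, k ≤ lb → frobNorm (mpgnnRep d φ ρ ψ W U P X k) ≤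
      Real.sqrt n * (L * β * m1) * ∑ i ∈ Finset.range k, (L ^ 3 * m2 * Pb) ^ i := by
  intro k
  induction k with
  | zero =>
      intro _
      show frobNorm (0 : Matrix (Fin n) (Fin (d 0)) ℝ) ≤ _
      rw [frobNorm_zero]
      simp
  | succ k ih =>
      intro hk1
      have hklt : k < lb := hk1
      have hkle : k ≤ lb := Nat.le_of_lt hklt
      have IH := ih hkle
      set τ : ℝ := L ^ 3 * m2 * Pb with hτ
      have hτ0 : 0 ≤ τ := by positivity
      set H := mpgnnRep d φ ρ ψ W U P X k with hH
      set c' : ℝ := Real.sqrt n * (L * β * m1) with hc'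
      have hc'0 : 0 ≤ c' := by positivity
      have hS0 : (0:ℝ) ≤ ∑ i ∈ Finset.range k, τ ^ i :=
        Finset.sum_nonneg fun i _ => pow_nonneg hτ0 i
      have hfrobH : frobNorm H ≤ c' * ∑ i ∈ Finset.range k, τ ^ i := IH
      show frobNorm ((X * U k + (P * H.map (ψ k) * W k).map (ρ k)).map (φ k)) ≤
        c' * ∑ i ∈ Finset.range (k + 1), τ ^ i
      have h1 : frobNorm ((X * U k + (P * H.map (ψ k) * W k).map (ρ k)).map (φ k)) ≤
          L * frobNorm (X * U k + (P * H.map (ψ k) * W k).map (ρ k)) :=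
        frobNorm_map_le _ _ L hL (hφ0 k hklt) (hLipφ k hklt)
      have h2 : frobNorm (X * U k + (P * H.map (ψ k) * W k).map (ρ k)) ≤
          frobNorm (X * U k) + frobNorm ((P * H.map (ψ k) * W k).map (ρ k)) :=
        frobNorm_add_le _ _
      have h3 : frobNorm (X * U k) ≤ Real.sqrt n * β * m1 := by
        calc frobNorm (X * U k) ≤ frobNorm X * specNorm (U k) := frobNorm_mul_le_right _ _
          _ ≤ (Real.sqrt n * β) * m1 := by
              apply mul_le_mul _ (hU k hklt) (specNorm_nonneg _) (by positivity)
              calc frobNorm X ≤ Real.sqrt (Fintype.card (Fin n)) * specNorm X :=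
                    frobNorm_le_sqrt_card X
                _ = Real.sqrt n * specNorm X := by rw [Fintype.card_fin]
                _ ≤ Real.sqrt n * β := mul_le_mul_of_nonneg_left hX (Real.sqrt_nonneg _)
      have h4 : frobNorm ((P * H.map (ψ k) * W k).map (ρ k)) ≤
          L * (Pb * (L * frobNorm H) * m2) := by
        have h5 : frobNorm (P * H.map (ψ k) * W k) ≤ Pb * (L * frobNorm H) * m2 := by
          calc frobNorm (P * H.map (ψ k) * W k)
              ≤ frobNorm (P * H.map (ψ k)) * specNorm (W k) := frobNorm_mul_le_right _ _
            _ ≤ (Pb * (L * frobNorm H)) * m2 := by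
                apply mul_le_mul _ (hW k hklt) (specNorm_nonneg _)
                  (mul_nonneg hPb (mul_nonneg hL (frobNorm_nonneg _)))
                calc frobNorm (P * H.map (ψ k)) ≤ specNorm P * frobNorm (H.map (ψ k)) :=
                      frobNorm_mul_le_left _ _
                  _ ≤ Pb * (L * frobNorm H) := by
                      apply mul_le_mul hP _ (frobNorm_nonneg _) hPb
                      exact frobNorm_map_le _ _ L hL (hψ0 k hklt) (hLipψ k hklt)
        calc frobNorm ((P * H.map (ψ k) * W k).map (ρ k))
            ≤ L * frobNorm (P * H.map (ψ k) * W k) :=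
              frobNorm_map_le _ _ L hL (hρ0 k hklt) (hLipρ k hklt)
          _ ≤ L * (Pb * (L * frobNorm H) * m2) := mul_le_mul_of_nonneg_left h5 hL
      have key : frobNorm ((X * U k + (P * H.map (ψ k) * W k).map (ρ k)).map (φ k)) ≤
          c' + τ * frobNorm H := by
        calc frobNorm ((X * U k + (P * H.map (ψ k) * W k).map (ρ k)).map (φ k))
            ≤ L * (Real.sqrt n * β * m1 + L * (Pb * (L * frobNorm H) * m2)) :=
              h1.trans (mul_le_mul_of_nonneg_left (h2.trans (add_le_add h3 h4)) hL)
          _ = c' + τ * frobNorm H := by rw [hc', hτ]; ring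
      calc frobNorm ((X * U k + (P * H.map (ψ k) * W k).map (ρ k)).map (φ k))
          ≤ c' + τ * frobNorm H := key
        _ ≤ c' + τ * (c' * ∑ i ∈ Finset.range k, τ ^ i) := by
            exact add_le_add_right (mul_le_mul_of_nonneg_left hfrobH hτ0) c'
        _ = c' * ∑ i ∈ Finset.range (k + 1), τ ^ i := by
            rw [geom_sum_succ]; ring


lemma perturbed_rep_frob_le {n : ℕ} (d : ℕ → ℕ) (φ ρ ψ : ℕ → ℝ → ℝ)
    (W ΔW : ∀ k : ℕ, Matrix (Fin (d k)) (Fin (d (k + 1))) ℝ)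
    (U ΔU : ∀ k : ℕ, Matrix (Fin (d 0)) (Fin (d (k + 1))) ℝ)
    (P : Matrix (Fin n) (Fin n) ℝ) (X : Matrix (Fin n) (Fin (d 0)) ℝ)
    (lb : ℕ) (L m1 m2 Pb β η : ℝ)
    (hL : 0 ≤ L) (hm1 : 0 ≤ m1) (hm2 : 0 ≤ m2) (hPb : 0 ≤ Pb) (hβ : 0 ≤ β) (hη : 0 ≤ η)
    (hP : specNorm P ≤ Pb) (hX : specNorm X ≤ β)
    (hLipφ : ∀ k, k < lb → ∀ x y : ℝ, |φ k x - φ k y| ≤ L * |x - y|)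
    (hLipρ : ∀ k, k < lb → ∀ x y : ℝ, |ρ k x - ρ k y| ≤ L * |x - y|)
    (hLipψ : ∀ k, k < lb → ∀ x y : ℝ, |ψ k x - ψ k y| ≤ L * |x - y|)
    (hφ0 : ∀ k, k < lb → φ k 0 = 0) (hρ0 : ∀ k, k < lb → ρ k 0 = 0)
    (hψ0 : ∀ k, k < lb → ψ k 0 = 0)
    (hU : ∀ k, k < lb → specNorm (U k) ≤ m1) (hW : ∀ k, k < lb → specNorm (W k) ≤ m2)
    (hΔU : ∀ k, k < lb → specNorm (ΔU k) ≤ η * m1)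
    (hΔW : ∀ k, k < lb → specNorm (ΔW k) ≤ η * m2) :
    ∀ k, k ≤ lb →
      frobNorm (mpgnnRep d φ ρ ψ (fun j => W j + ΔW j) (fun j => U j + ΔU j) P X k) ≤
      Real.sqrt n * (L * β * m1) * (1 + η) ^ k *
        ∑ i ∈ Finset.range k, (L ^ 3 * m2 * Pb) ^ i := by
  intro k hk
  set τ : ℝ := L ^ 3 * m2 * Pb with hτ
  have hτ0 : 0 ≤ τ := by positivity
  have h1η : (1:ℝ) ≤ 1 + η := by linarith
  have base := rep_frob_le d φ ρ ψ (fun j => W j + ΔW j) (fun j => U j + ΔU j) P X lb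
    L ((1 + η) * m1) ((1 + η) * m2) Pb β hL (by positivity) (by positivity) hPb hβ hP hX
    hLipφ hLipρ hLipψ hφ0 hρ0 hψ0
    (fun j hj => (specNorm_add_le _ _).trans (by
      have := hU j hj; have := hΔU j hj; nlinarith))
    (fun j hj => (specNorm_add_le _ _).trans (by
      have := hW j hj; have := hΔW j hj; nlinarith))
    k hk
  refine base.trans ?_
  have key : Real.sqrt n * (L * β * ((1 + η) * m1)) *
      ∑ i ∈ Finset.range k, (L ^ 3 * ((1 + η) * m2) * Pb) ^ i ≤
      Real.sqrt n * (L * β * m1) * ((1 + η) ^ k * ∑ i ∈ Finset.range k, τ ^ i) := by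
    have hsum : (1 + η) * ∑ i ∈ Finset.range k, ((1 + η) * τ) ^ i ≤
        (1 + η) ^ k * ∑ i ∈ Finset.range k, τ ^ i := by
      rw [Finset.mul_sum, Finset.mul_sum]
      apply Finset.sum_le_sum
      intro i hi
      have hik : i + 1 ≤ k := Finset.mem_range.mp hi
      calc (1 + η) * ((1 + η) * τ) ^ i = (1 + η) ^ (i + 1) * τ ^ i := by
            rw [mul_pow, pow_succ]; ring
        _ ≤ (1 + η) ^ k * τ ^ i := by
            apply mul_le_mul_of_nonneg_right _ (pow_nonneg hτ0 i)
            exact pow_le_pow_right₀ h1η hik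
    have hrw : ∀ i, (L ^ 3 * ((1 + η) * m2) * Pb) ^ i = ((1 + η) * τ) ^ i := by
      intro i; congr 1; rw [hτ]; ring
    calc Real.sqrt n * (L * β * ((1 + η) * m1)) *
        ∑ i ∈ Finset.range k, (L ^ 3 * ((1 + η) * m2) * Pb) ^ i
        = Real.sqrt n * (L * β * m1) *
          ((1 + η) * ∑ i ∈ Finset.range k, ((1 + η) * τ) ^ i) := by
          rw [Finset.sum_congr rfl fun i _ => hrw i]; ring
      _ ≤ Real.sqrt n * (L * β * m1) * ((1 + η) ^ k * ∑ i ∈ Finset.range k, τ ^ i) := by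
          apply mul_le_mul_of_nonneg_left hsum (by positivity)
  calc Real.sqrt n * (L * β * ((1 + η) * m1)) *
        ∑ i ∈ Finset.range k, (L ^ 3 * ((1 + η) * m2) * Pb) ^ i
      ≤ Real.sqrt n * (L * β * m1) * ((1 + η) ^ k * ∑ i ∈ Finset.range k, τ ^ i) := key
    _ = Real.sqrt n * (L * β * m1) * (1 + η) ^ k * ∑ i ∈ Finset.range k, τ ^ i := by ring


set_option maxHeartbeats 1000000 in
lemma diff_frob_le {n : ℕ} (d : ℕ → ℕ) (φ ρ ψ : ℕ → ℝ → ℝ)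
    (W ΔW : ∀ k : ℕ, Matrix (Fin (d k)) (Fin (d (k + 1))) ℝ)
    (U ΔU : ∀ k : ℕ, Matrix (Fin (d 0)) (Fin (d (k + 1))) ℝ)
    (P : Matrix (Fin n) (Fin n) ℝ) (X : Matrix (Fin n) (Fin (d 0)) ℝ)
    (lb : ℕ) (L m1 m2 Pb β η : ℝ)
    (hL : 0 ≤ L) (hm1 : 0 ≤ m1) (hm2 : 0 ≤ m2) (hPb : 0 ≤ Pb) (hβ : 0 ≤ β) (hη : 0 ≤ η)
    (hP : specNorm P ≤ Pb) (hX : specNorm X ≤ β)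
    (hLipφ : ∀ k, k < lb → ∀ x y : ℝ, |φ k x - φ k y| ≤ L * |x - y|)
    (hLipρ : ∀ k, k < lb → ∀ x y : ℝ, |ρ k x - ρ k y| ≤ L * |x - y|)
    (hLipψ : ∀ k, k < lb → ∀ x y : ℝ, |ψ k x - ψ k y| ≤ L * |x - y|)
    (hφ0 : ∀ k, k < lb → φ k 0 = 0) (hρ0 : ∀ k, k < lb → ρ k 0 = 0)
    (hψ0 : ∀ k, k < lb → ψ k 0 = 0)
    (hU : ∀ k, k < lb → specNorm (U k) ≤ m1) (hW : ∀ k, k < lb → specNorm (W k) ≤ m2)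
    (hΔU : ∀ k, k < lb → specNorm (ΔU k) ≤ η * m1)
    (hΔW : ∀ k, k < lb → specNorm (ΔW k) ≤ η * m2) :
    ∀ k, k ≤ lb →
      frobNorm (mpgnnRep d φ ρ ψ (fun j => W j + ΔW j) (fun j => U j + ΔU j) P X k -
        mpgnnRep d φ ρ ψ W U P X k) ≤
      η * k * (Real.sqrt n * (L * β * m1) * (1 + η) ^ k *
        ∑ i ∈ Finset.range k, (L ^ 3 * m2 * Pb) ^ i) := by
  set τ : ℝ := L ^ 3 * m2 * Pb with hτ
  have hτ0 : 0 ≤ τ := by positivity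
  have h1η : (1:ℝ) ≤ 1 + η := by linarith
  set c' : ℝ := Real.sqrt n * (L * β * m1) with hc'
  have hc'0 : 0 ≤ c' := by positivity
  intro k
  induction k with
  | zero =>
      intro _
      show frobNorm ((0 : Matrix (Fin n) (Fin (d 0)) ℝ) - 0) ≤ _
      rw [sub_zero, frobNorm_zero]
      simp
  | succ k ih =>
      intro hk1
      have hklt : k < lb := hk1
      have hkle : k ≤ lb := Nat.le_of_lt hklt
      have IH := ih hkle
      set H' := mpgnnRep d φ ρ ψ (fun j => W j + ΔW j) (fun j => U j + ΔU j) P X k with hH'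
      set H := mpgnnRep d φ ρ ψ W U P X k with hH
      have hS0 : (0:ℝ) ≤ ∑ i ∈ Finset.range k, τ ^ i :=
        Finset.sum_nonneg fun i _ => pow_nonneg hτ0 i
      set Sk : ℝ := ∑ i ∈ Finset.range k, τ ^ i with hSk
      set Bk : ℝ := c' * (1 + η) ^ k * Sk with hBk
      have hBk0 : 0 ≤ Bk := by
        apply mul_nonneg (mul_nonneg hc'0 (pow_nonneg (by linarith) k)) hS0
      have hbH' : frobNorm H' ≤ Bk :=
        perturbed_rep_frob_le d φ ρ ψ W ΔW U ΔU P X lb L m1 m2 Pb β η hL hm1 hm2 hPb hβ hη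
          hP hX hLipφ hLipρ hLipψ hφ0 hρ0 hψ0 hU hW hΔU hΔW k hkle
      have hDk : frobNorm (H' - H) ≤ η * k * Bk := IH
      -- unfold one layer
      show frobNorm
          ((X * (U k + ΔU k) + (P * H'.map (ψ k) * (W k + ΔW k)).map (ρ k)).map (φ k) -
           (X * U k + (P * H.map (ψ k) * W k).map (ρ k)).map (φ k)) ≤ _
      set Mρ' := (P * H'.map (ψ k) * (W k + ΔW k)).map (ρ k) with hMρ'
      set Mρ := (P * H.map (ψ k) * W k).map (ρ k) with hMρ
      have step1 : frobNorm
          ((X * (U k + ΔU k) + Mρ').map (φ k) - (X * U k + Mρ).map (φ k)) ≤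
          L * frobNorm ((X * (U k + ΔU k) + Mρ') - (X * U k + Mρ)) :=
        frobNorm_map_sub_le _ _ _ L hL (hLipφ k hklt)
      have hAeq : (X * (U k + ΔU k) + Mρ') - (X * U k + Mρ) = X * ΔU k + (Mρ' - Mρ) := by
        rw [Matrix.mul_add]; abel
      have step2 : frobNorm ((X * (U k + ΔU k) + Mρ') - (X * U k + Mρ)) ≤
          frobNorm (X * ΔU k) + frobNorm (Mρ' - Mρ) := by
        rw [hAeq]
        exact frobNorm_add_le _ _
      have step3 : frobNorm (X * ΔU k) ≤ Real.sqrt n * β * (η * m1) := by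
        calc frobNorm (X * ΔU k) ≤ frobNorm X * specNorm (ΔU k) := frobNorm_mul_le_right _ _
          _ ≤ (Real.sqrt n * β) * (η * m1) := by
              apply mul_le_mul _ (hΔU k hklt) (specNorm_nonneg _) (by positivity)
              calc frobNorm X ≤ Real.sqrt (Fintype.card (Fin n)) * specNorm X :=
                    frobNorm_le_sqrt_card X
                _ = Real.sqrt n * specNorm X := by rw [Fintype.card_fin]
                _ ≤ Real.sqrt n * β := mul_le_mul_of_nonneg_left hX (Real.sqrt_nonneg _)
      have hCeq : P * H'.map (ψ k) * (W k + ΔW k) - P * H.map (ψ k) * W k =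
          (P * H'.map (ψ k)) * ΔW k + (P * (H'.map (ψ k) - H.map (ψ k))) * W k := by
        rw [Matrix.mul_add, Matrix.mul_sub, Matrix.sub_mul]; abel
      have hfrobHψ' : frobNorm (H'.map (ψ k)) ≤ L * frobNorm H' :=
        frobNorm_map_le _ _ L hL (hψ0 k hklt) (hLipψ k hklt)
      have hfrobDψ : frobNorm (H'.map (ψ k) - H.map (ψ k)) ≤ L * frobNorm (H' - H) :=
        frobNorm_map_sub_le _ _ _ L hL (hLipψ k hklt)
      have step4 : frobNorm (Mρ' - Mρ) ≤
          L * (Pb * (L * Bk) * (η * m2) + Pb * (L * frobNorm (H' - H)) * m2) := by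
        have h1 : frobNorm (Mρ' - Mρ) ≤
            L * frobNorm (P * H'.map (ψ k) * (W k + ΔW k) - P * H.map (ψ k) * W k) :=
          frobNorm_map_sub_le _ _ _ L hL (hLipρ k hklt)
        have h2 : frobNorm (P * H'.map (ψ k) * (W k + ΔW k) - P * H.map (ψ k) * W k) ≤
            Pb * (L * Bk) * (η * m2) + Pb * (L * frobNorm (H' - H)) * m2 := by
          rw [hCeq]
          refine (frobNorm_add_le _ _).trans (add_le_add ?_ ?_)
          · calc frobNorm ((P * H'.map (ψ k)) * ΔW k)
                ≤ frobNorm (P * H'.map (ψ k)) * specNorm (ΔW k) := frobNorm_mul_le_right _ _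
              _ ≤ (Pb * (L * Bk)) * (η * m2) := by
                  apply mul_le_mul _ (hΔW k hklt) (specNorm_nonneg _)
                    (mul_nonneg hPb (mul_nonneg hL hBk0))
                  calc frobNorm (P * H'.map (ψ k)) ≤ specNorm P * frobNorm (H'.map (ψ k)) :=
                        frobNorm_mul_le_left _ _
                    _ ≤ Pb * (L * Bk) := by
                        apply mul_le_mul hP _ (frobNorm_nonneg _) hPb
                        exact hfrobHψ'.trans (mul_le_mul_of_nonneg_left hbH' hL)
          · calc frobNorm ((P * (H'.map (ψ k) - H.map (ψ k))) * W k)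
                ≤ frobNorm (P * (H'.map (ψ k) - H.map (ψ k))) * specNorm (W k) :=
                  frobNorm_mul_le_right _ _
              _ ≤ (Pb * (L * frobNorm (H' - H))) * m2 := by
                  apply mul_le_mul _ (hW k hklt) (specNorm_nonneg _)
                    (mul_nonneg hPb (mul_nonneg hL (frobNorm_nonneg _)))
                  calc frobNorm (P * (H'.map (ψ k) - H.map (ψ k)))
                      ≤ specNorm P * frobNorm (H'.map (ψ k) - H.map (ψ k)) :=
                        frobNorm_mul_le_left _ _
                    _ ≤ Pb * (L * frobNorm (H' - H)) := by
                        apply mul_le_mul hP hfrobDψ (frobNorm_nonneg _) hPb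
        exact h1.trans (mul_le_mul_of_nonneg_left h2 hL)
      -- combine
      have total : frobNorm
          ((X * (U k + ΔU k) + Mρ').map (φ k) - (X * U k + Mρ).map (φ k)) ≤
          η * c' + τ * (η * Bk) + τ * frobNorm (H' - H) := by
        calc frobNorm ((X * (U k + ΔU k) + Mρ').map (φ k) - (X * U k + Mρ).map (φ k))
            ≤ L * (Real.sqrt n * β * (η * m1) +
                L * (Pb * (L * Bk) * (η * m2) + Pb * (L * frobNorm (H' - H)) * m2)) :=
              step1.trans (mul_le_mul_of_nonneg_left (step2.trans (add_le_add step3 step4)) hL)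
          _ = η * c' + τ * (η * Bk) + τ * frobNorm (H' - H) := by rw [hc', hτ]; ring
      clear_value Bk Sk H' H Mρ' Mρ τ c'
      clear step1 step2 step3 step4 hCeq hAeq hfrobHψ' hfrobDψ hbH' hMρ' hMρ hH hH' ih
      have arith : η * c' + τ * (η * Bk) + τ * (η * k * Bk) ≤
          η * (k + 1) * (c' * (1 + η) ^ (k + 1) * (τ * Sk + 1)) := by
        have h1 : (1:ℝ) ≤ (1 + η) ^ (k + 1) := one_le_pow₀ h1η
        have hk0 : (0:ℝ) ≤ (k : ℝ) := Nat.cast_nonneg k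
        have hpow : (1:ℝ) ≤ ((k:ℝ) + 1) * (1 + η) ^ (k + 1) := by nlinarith
        have e1 : η * c' ≤ η * ((k:ℝ) + 1) * (c' * (1 + η) ^ (k + 1)) := by
          nlinarith [mul_nonneg hη hc'0]
        have e2 : τ * (η * Bk) + τ * (η * (k:ℝ) * Bk) ≤
            η * ((k:ℝ) + 1) * ((1 + η) * τ * Bk) := by
          nlinarith [mul_nonneg (mul_nonneg (mul_nonneg hη hη) hτ0) hBk0,
            mul_nonneg hk0 (mul_nonneg (mul_nonneg (mul_nonneg hη hη) hτ0) hBk0)]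
        calc η * c' + τ * (η * Bk) + τ * (η * (k:ℝ) * Bk)
            ≤ η * ((k:ℝ) + 1) * (c' * (1 + η) ^ (k + 1)) +
              η * ((k:ℝ) + 1) * ((1 + η) * τ * Bk) := by linarith
          _ = η * ((k:ℝ) + 1) * (c' * (1 + η) ^ (k + 1) * (τ * Sk + 1)) := by
              rw [hBk]; ring
      calc frobNorm ((X * (U k + ΔU k) + Mρ').map (φ k) - (X * U k + Mρ).map (φ k))
          ≤ η * c' + τ * (η * Bk) + τ * frobNorm (H' - H) := total
        _ ≤ η * c' + τ * (η * Bk) + τ * (η * k * Bk) := by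
            refine add_le_add_right (mul_le_mul_of_nonneg_left hDk hτ0) _
        _ ≤ η * (k + 1) * (c' * (1 + η) ^ (k + 1) * (τ * Sk + 1)) := arith
        _ = η * (k + 1 : ℕ) * (c' * (1 + η) ^ (k + 1) * ∑ i ∈ Finset.range (k + 1), τ ^ i) := by
            rw [geom_sum_succ, ← hSk]
            push_cast
            ring


section EtaLemmas
variable (l : ℕ) (d : ℕ → ℕ)
    (W ΔW : ∀ k : ℕ, Matrix (Fin (d k)) (Fin (d (k + 1))) ℝ)
    (U ΔU : ∀ k : ℕ, Matrix (Fin (d 0)) (Fin (d (k + 1))) ℝ)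

lemma etaSet_finite :
    ({x | ∃ k, k < l ∧ specNorm (ΔW k) / specNorm (W k) = x} ∪
     {x | ∃ k, k < l - 1 ∧ specNorm (ΔU k) / specNorm (U k) = x}).Finite := by
  apply Set.Finite.union
  · have h : {x | ∃ k, k < l ∧ specNorm (ΔW k) / specNorm (W k) = x} =
        (fun k => specNorm (ΔW k) / specNorm (W k)) '' Set.Iio l := by
      ext x; simp [Set.mem_image, Set.mem_Iio]
    rw [h]; exact (Set.finite_Iio l).image _
  · have h : {x | ∃ k, k < l - 1 ∧ specNorm (ΔU k) / specNorm (U k) = x} =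
        (fun k => specNorm (ΔU k) / specNorm (U k)) '' Set.Iio (l - 1) := by
      ext x; simp [Set.mem_image, Set.mem_Iio]
    rw [h]; exact (Set.finite_Iio (l - 1)).image _

lemma le_etaRatio_W (k : ℕ) (hk : k < l) :
    specNorm (ΔW k) / specNorm (W k) ≤ etaRatio l d W ΔW U ΔU :=
  le_csSup (etaSet_finite (l:=l) (d:=d) (W:=W) (ΔW:=ΔW) (U:=U) (ΔU:=ΔU)).bddAbove (Or.inl ⟨k, hk, rfl⟩)

lemma le_etaRatio_U (k : ℕ) (hk : k < l - 1) :
    specNorm (ΔU k) / specNorm (U k) ≤ etaRatio l d W ΔW U ΔU :=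
  le_csSup (etaSet_finite (l:=l) (d:=d) (W:=W) (ΔW:=ΔW) (U:=U) (ΔU:=ΔU)).bddAbove (Or.inr ⟨k, hk, rfl⟩)

lemma etaRatio_nonneg (hl : 0 < l) : 0 ≤ etaRatio l d W ΔW U ΔU := by
  refine le_trans ?_ (le_etaRatio_W l d W ΔW U ΔU 0 hl)
  exact div_nonneg (norm_nonneg _) (norm_nonneg _)

lemma one_add_pow_le_exp (η : ℝ) (l : ℕ) (hl : 1 ≤ l) (hη0 : 0 ≤ η) (hη : η ≤ 1 / l) :
    (1 + η) ^ l ≤ Real.exp 1 := by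
  have hl0 : (0:ℝ) < l := by exact_mod_cast hl
  have h1 : (1 + η) ≤ Real.exp η := by have := Real.add_one_le_exp η; linarith
  calc (1 + η) ^ l ≤ (Real.exp η) ^ l := pow_le_pow_left₀ (by linarith) h1 l
    _ = Real.exp (l * η) := by rw [← Real.exp_nat_mul]
    _ ≤ Real.exp 1 := by
        apply Real.exp_le_exp.mpr
        calc (l : ℝ) * η ≤ (l : ℝ) * (1 / l) := by
              exact mul_le_mul_of_nonneg_left hη (le_of_lt hl0)
          _ = 1 := by field_simp

lemma abs_sInf_sub_sInf_le {α : Type*} (s : Set α) (hs : s.Nonempty) (f g : α → ℝ) (C D : ℝ)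
    (hfg : ∀ a ∈ s, |f a - g a| ≤ C)
    (hf : ∀ a ∈ s, -D ≤ f a) (hg : ∀ a ∈ s, -D ≤ g a) :
    |sInf {x | ∃ a ∈ s, f a = x} - sInf {x | ∃ a ∈ s, g a = x}| ≤ C := by
  set F := {x | ∃ a ∈ s, f a = x} with hF
  set G := {x | ∃ a ∈ s, g a = x} with hG
  obtain ⟨a₀, ha₀⟩ := hs
  have hFne : F.Nonempty := ⟨f a₀, a₀, ha₀, rfl⟩
  have hGne : G.Nonempty := ⟨g a₀, a₀, ha₀, rfl⟩
  have hFbdd : BddBelow F := ⟨-D, by rintro x ⟨a, ha, rfl⟩; exact hf a ha⟩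
  have hGbdd : BddBelow G := ⟨-D, by rintro x ⟨a, ha, rfl⟩; exact hg a ha⟩
  rw [abs_sub_le_iff]
  constructor
  · have h1 : sInf F - C ≤ sInf G := by
      apply le_csInf hGne
      rintro x ⟨a, ha, rfl⟩
      have h2 : sInf F ≤ f a := csInf_le hFbdd ⟨a, ha, rfl⟩
      have h3 := (abs_le.mp (hfg a ha)).2
      linarith
    linarith
  · have h1 : sInf G - C ≤ sInf F := by
      apply le_csInf hFne
      rintro x ⟨a, ha, rfl⟩
      have h2 : sInf G ≤ g a := csInf_le hGbdd ⟨a, ha, rfl⟩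
      have h3 := (abs_le.mp (hfg a ha)).1
      linarith
    linarith

lemma specNorm_zero {m n : Type*} [Fintype m] [Fintype n] [DecidableEq n] :
    specNorm (0 : Matrix m n ℝ) = 0 := by
  unfold specNorm
  rw [map_zero, map_zero, norm_zero]
end EtaLemmas
end AuxMPGNN

lemma readout_helper (n : ℕ) (y : ℝ) (hy : 0 ≤ y) :
    ((n : ℕ) : ℝ)⁻¹ * (Real.sqrt n * (Real.sqrt n * y)) ≤ y := by
  rcases Nat.eq_zero_or_pos n with h | h
  · subst h; simpa using hy
  · have hn : (0:ℝ) < n := by exact_mod_cast h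
    have h2 : ((n : ℕ) : ℝ)⁻¹ * (Real.sqrt n * (Real.sqrt n * y)) =
        (Real.sqrt n * Real.sqrt n) * y * ((n:ℝ))⁻¹ := by ring
    rw [h2, Real.mul_self_sqrt hn.le]
    have h3 : (n:ℝ) * y * (n:ℝ)⁻¹ = y := by field_simp
    rw [h3]

lemma abs_readout_le {n q : ℕ} (A : Matrix (Fin n) (Fin q) ℝ) (c : Fin q) (y : ℝ) (hy : 0 ≤ y)
    (hA : frobNorm A ≤ Real.sqrt n * y) :
    |(n:ℝ)⁻¹ * ∑ r, A r c| ≤ y := by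
  have h1 : |∑ r, A r c| ≤ Real.sqrt n * frobNorm A := by
    have h := abs_col_sum_le A c
    rwa [Fintype.card_fin] at h
  have hn0 : (0:ℝ) ≤ ((n : ℕ) : ℝ)⁻¹ := by positivity
  rw [abs_mul, abs_of_nonneg hn0]
  calc ((n : ℕ) : ℝ)⁻¹ * |∑ r, A r c|
      ≤ ((n : ℕ) : ℝ)⁻¹ * (Real.sqrt n * (Real.sqrt n * y)) := by
        apply mul_le_mul_of_nonneg_left _ hn0
        exact h1.trans (mul_le_mul_of_nonneg_left hA (Real.sqrt_nonneg _))
    _ ≤ y := readout_helper n y hy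

lemma abs_sub_le_abs_add_abs (x y : ℝ) : |x - y| ≤ |x| + |y| := by
  rw [sub_eq_add_neg]
  exact (abs_add_le _ _).trans (by rw [abs_neg])


set_option maxHeartbeats 1600000 in
/-- Perturbation bound for the robust margin operator of an `l`-layer MPGNN under
`ε`-attacks: with `η ≤ 1/l` the maximal relative perturbation size, `‖X‖₂ ≤ B`,
`‖P_{G'}‖₂ ≤ P̄` on the attack set, and `τ = L³ M₂ P̄`, the change of the robust margin
operator is at most `2 e η L (B+ε) M₁ M₂ (l+1)²` if `τ = 1`, and at most
`2 e η l L (B+ε) M₁ M₂ (τ^{l-1} − 1)/(τ − 1)` if `τ ≠ 1`. -/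
theorem mpgnn_robust_margin_pert_le (n l : ℕ) (hl : 2 ≤ l) (d : ℕ → ℕ)
    (φ ρ ψ : ℕ → ℝ → ℝ)
    (W ΔW : ∀ k : ℕ, Matrix (Fin (d k)) (Fin (d (k + 1))) ℝ)
    (U ΔU : ∀ k : ℕ, Matrix (Fin (d 0)) (Fin (d (k + 1))) ℝ)
    (L M₁ M₂ : ℝ)
    (hLipφ : ∀ k, k < l - 1 → ∀ x y : ℝ, |φ k x - φ k y| ≤ L * |x - y|)
    (hLipρ : ∀ k, k < l - 1 → ∀ x y : ℝ, |ρ k x - ρ k y| ≤ L * |x - y|)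
    (hLipψ : ∀ k, k < l - 1 → ∀ x y : ℝ, |ψ k x - ψ k y| ≤ L * |x - y|)
    (hφ0 : ∀ k, k < l - 1 → φ k 0 = 0) (hρ0 : ∀ k, k < l - 1 → ρ k 0 = 0)
    (hψ0 : ∀ k, k < l - 1 → ψ k 0 = 0)
    (hWne : ∀ k, k < l → W k ≠ 0) (hUne : ∀ k, k < l - 1 → U k ≠ 0)
    (hU : ∀ k, k < l - 1 → specNorm (U k) ≤ M₁)
    (hW : ∀ k, k < l → specNorm (W k) ≤ M₂)
    (hη : etaRatio l d W ΔW U ΔU ≤ 1 / (l : ℝ))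
    (ε : ℝ) (hε : 0 < ε)
    (X : Matrix (Fin n) (Fin (d 0)) ℝ) (A : Matrix (Fin n) (Fin n) ℝ)
    (B : ℝ) (hX : specNorm X ≤ B)
    (Pfun : Matrix (Fin n) (Fin n) ℝ → Matrix (Fin n) (Fin n) ℝ) (Pbar : ℝ)
    (hPbar : ∀ G' ∈ attack ε (X, A), specNorm (Pfun G'.2) ≤ Pbar)
    (i j : Fin (d l)) :
    (L ^ 3 * M₂ * Pbar = 1 →
      |mpgnnRobustMarginPair l d φ ρ ψ (fun k => W k + ΔW k) (fun k => U k + ΔU k)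
          Pfun ε (X, A) i j -
        mpgnnRobustMarginPair l d φ ρ ψ W U Pfun ε (X, A) i j| ≤
        2 * Real.exp 1 * etaRatio l d W ΔW U ΔU * L * (B + ε) * M₁ * M₂ * (l + 1) ^ 2) ∧
    (L ^ 3 * M₂ * Pbar ≠ 1 →
      |mpgnnRobustMarginPair l d φ ρ ψ (fun k => W k + ΔW k) (fun k => U k + ΔU k)
          Pfun ε (X, A) i j -
        mpgnnRobustMarginPair l d φ ρ ψ W U Pfun ε (X, A) i j| ≤
        2 * Real.exp 1 * etaRatio l d W ΔW U ΔU * l * L * (B + ε) * M₁ * M₂ *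
          (((L ^ 3 * M₂ * Pbar) ^ (l - 1) - 1) / (L ^ 3 * M₂ * Pbar - 1))) := by
  obtain ⟨m, rfl⟩ : ∃ m, l = m + 2 := ⟨l - 2, by omega⟩
  have hL0 : 0 ≤ L := by
    have h := hLipφ 0 (by omega) 1 0
    have h2 := abs_nonneg (φ 0 1 - φ 0 0)
    have h3 : |(1:ℝ) - 0| = 1 := by norm_num
    rw [h3, mul_one] at h
    linarith
  have hM1 : 0 ≤ M₁ := le_trans (specNorm_nonneg _) (hU 0 (by omega))
  have hM2 : 0 ≤ M₂ := le_trans (specNorm_nonneg _) (hW 0 (by omega))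
  have hB0 : 0 ≤ B := le_trans (specNorm_nonneg _) hX
  set β : ℝ := B + ε with hβdef
  have hβ0 : 0 ≤ β := by rw [hβdef]; linarith
  have mem0 : ((X, (0 : Matrix (Fin n) (Fin n) ℝ))) ∈ attack ε (X, A) := by
    refine ⟨?_, ?_, ?_⟩
    · show specNorm (X - X) ≤ ε
      rw [sub_self, specNorm_zero]; linarith
    · show (0 : Matrix (Fin n) (Fin n) ℝ).IsSymm
      simp [Matrix.IsSymm]
    · intro i j; exact Or.inl rfl
  have hPb0 : 0 ≤ Pbar := le_trans (specNorm_nonneg _) (hPbar _ mem0)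
  set η : ℝ := etaRatio (m + 2) d W ΔW U ΔU with hηdef
  have hη0 : 0 ≤ η := etaRatio_nonneg _ _ _ _ _ _ (by omega)
  have hη1 : η ≤ 1 / ((m + 2 : ℕ) : ℝ) := hη
  have h1η : (1:ℝ) ≤ 1 + η := by linarith
  set τ : ℝ := L ^ 3 * M₂ * Pbar with hτdef
  have hτ0 : 0 ≤ τ := by rw [hτdef]; positivity
  set S : ℝ := ∑ i ∈ Finset.range (m + 1), τ ^ i with hSdef
  have hS0 : 0 ≤ S := Finset.sum_nonneg fun i _ => pow_nonneg hτ0 i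
  have hexp : (1 + η) ^ (m + 2) ≤ Real.exp 1 :=
    one_add_pow_le_exp η (m + 2) (by omega) hη0 hη1
  have hexp1 : (1:ℝ) ≤ Real.exp 1 := by linarith [Real.add_one_le_exp 1]
  have hexpm1 : (1 + η) ^ (m + 1) ≤ Real.exp 1 :=
    le_trans (pow_le_pow_right₀ h1η (by omega)) hexp
  have hΔW' : ∀ k, k < m + 2 → specNorm (ΔW k) ≤ η * M₂ := by
    intro k hk
    have h1 := le_etaRatio_W (m + 2) d W ΔW U ΔU k hk
    have h2 := specNorm_pos (W k) (hWne k hk)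
    rw [div_le_iff₀ h2] at h1
    calc specNorm (ΔW k) ≤ η * specNorm (W k) := by linarith
      _ ≤ η * M₂ := mul_le_mul_of_nonneg_left (hW k hk) hη0
  have hΔU' : ∀ k, k < m + 1 → specNorm (ΔU k) ≤ η * M₁ := by
    intro k hk
    have h1 := le_etaRatio_U (m + 2) d W ΔW U ΔU k hk
    have h2 := specNorm_pos (U k) (hUne k hk)
    rw [div_le_iff₀ h2] at h1
    calc specNorm (ΔU k) ≤ η * specNorm (U k) := by linarith
      _ ≤ η * M₁ := mul_le_mul_of_nonneg_left (hU k hk) hη0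
  have hW1 : ∀ k, k < m + 1 → specNorm (W k) ≤ M₂ := fun k hk => hW k (by omega)
  set K : ℝ := Real.exp 1 * η * ((m : ℝ) + 2) * L * β * M₁ * M₂ * S with hKdef
  set D0 : ℝ := Real.exp 1 * Real.exp 1 * (L * β * M₁ * M₂ * S) with hD0def
  have hLβM : 0 ≤ L * β * M₁ := mul_nonneg (mul_nonneg hL0 hβ0) hM1
  have hpow1 : (0:ℝ) ≤ (1 + η) ^ (m + 1) := pow_nonneg (by linarith) _
  have hcore : ∀ G' ∈ attack ε (X, A), ∀ c : Fin (d (m + 2)),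
      |mpgnnOut d φ ρ ψ (fun k => W k + ΔW k) (fun k => U k + ΔU k) (Pfun G'.2) G'.1 (m + 2) c -
        mpgnnOut d φ ρ ψ W U (Pfun G'.2) G'.1 (m + 2) c| ≤ K ∧
      |mpgnnOut d φ ρ ψ (fun k => W k + ΔW k) (fun k => U k + ΔU k) (Pfun G'.2) G'.1 (m + 2) c| ≤ D0 ∧
      |mpgnnOut d φ ρ ψ W U (Pfun G'.2) G'.1 (m + 2) c| ≤ D0 := by
    intro G' hG' c
    have hP : specNorm (Pfun G'.2) ≤ Pbar := hPbar G' hG'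
    have hX' : specNorm G'.1 ≤ β := by
      have h1 : G'.1 = (G'.1 - X) + X := by rw [sub_add_cancel]
      calc specNorm G'.1 = specNorm ((G'.1 - X) + X) := by rw [← h1]
        _ ≤ specNorm (G'.1 - X) + specNorm X := specNorm_add_le _ _
        _ ≤ ε + B := add_le_add hG'.1 hX
        _ = β := by rw [hβdef]; ring
    have hrep := rep_frob_le d φ ρ ψ W U (Pfun G'.2) G'.1 (m + 1) L M₁ M₂ Pbar β
      hL0 hM1 hM2 hPb0 hβ0 hP hX' hLipφ hLipρ hLipψ hφ0 hρ0 hψ0 hU hW1 (m + 1) le_rfl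
    have hrep' := perturbed_rep_frob_le d φ ρ ψ W ΔW U ΔU (Pfun G'.2) G'.1 (m + 1) L M₁ M₂
      Pbar β η hL0 hM1 hM2 hPb0 hβ0 hη0 hP hX' hLipφ hLipρ hLipψ hφ0 hρ0 hψ0 hU hW1
      (fun k hk => hΔU' k hk) (fun k hk => hΔW' k (by omega)) (m + 1) le_rfl
    have hdiff := diff_frob_le d φ ρ ψ W ΔW U ΔU (Pfun G'.2) G'.1 (m + 1) L M₁ M₂ Pbar β η
      hL0 hM1 hM2 hPb0 hβ0 hη0 hP hX' hLipφ hLipρ hLipψ hφ0 hρ0 hψ0 hU hW1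
      (fun k hk => hΔU' k hk) (fun k hk => hΔW' k (by omega)) (m + 1) le_rfl
    rw [← hτdef, ← hSdef] at hrep hrep' hdiff
    push_cast at hdiff
    set H' := mpgnnRep d φ ρ ψ (fun k => W k + ΔW k) (fun k => U k + ΔU k) (Pfun G'.2) G'.1 (m + 1) with hH'
    set H := mpgnnRep d φ ρ ψ W U (Pfun G'.2) G'.1 (m + 1) with hH
    have houtdiff : mpgnnOut d φ ρ ψ (fun k => W k + ΔW k) (fun k => U k + ΔU k) (Pfun G'.2) G'.1 (m + 2) c -
        mpgnnOut d φ ρ ψ W U (Pfun G'.2) G'.1 (m + 2) c =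
        (n : ℝ)⁻¹ * ∑ r, (H' * (W (m + 1) + ΔW (m + 1)) - H * W (m + 1)) r c := by
      show (n : ℝ)⁻¹ * (∑ r, (H' * (W (m + 1) + ΔW (m + 1))) r c) -
          (n : ℝ)⁻¹ * (∑ r, (H * W (m + 1)) r c) = _
      rw [← mul_sub, ← Finset.sum_sub_distrib]
      simp [Matrix.sub_apply]
    have hR'0 : 0 ≤ Real.sqrt (n:ℝ) * (L * β * M₁) * (1 + η) ^ (m + 1) * S :=
      mul_nonneg (mul_nonneg (mul_nonneg (Real.sqrt_nonneg _) hLβM) hpow1) hS0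
    have hm20 : (0:ℝ) ≤ (m : ℝ) + 2 := by positivity
    have hm10 : (0:ℝ) ≤ (m : ℝ) + 1 := by positivity
    have hsplitfrob : frobNorm (H' * (W (m + 1) + ΔW (m + 1)) - H * W (m + 1)) ≤
        Real.sqrt n * ((L * β * M₁) * (1 + η) ^ (m + 1) * S * (η * M₂) * ((m : ℝ) + 2)) := by
      have hs : H' * (W (m + 1) + ΔW (m + 1)) - H * W (m + 1) =
          H' * ΔW (m + 1) + (H' - H) * W (m + 1) := by
        rw [Matrix.mul_add, Matrix.sub_mul]; abel
      rw [hs]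
      have e1 : frobNorm (H' * ΔW (m + 1)) ≤
          (Real.sqrt n * (L * β * M₁) * (1 + η) ^ (m + 1) * S) * (η * M₂) := by
        refine (frobNorm_mul_le_right _ _).trans ?_
        exact mul_le_mul hrep' (hΔW' (m + 1) (by omega)) (specNorm_nonneg _) hR'0
      have e2 : frobNorm ((H' - H) * W (m + 1)) ≤
          (η * ((m : ℝ) + 1) * (Real.sqrt n * (L * β * M₁) * (1 + η) ^ (m + 1) * S)) * M₂ := by
        refine (frobNorm_mul_le_right _ _).trans ?_
        exact mul_le_mul hdiff (hW (m + 1) (by omega)) (specNorm_nonneg _)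
          (mul_nonneg (mul_nonneg hη0 hm10) hR'0)
      refine (frobNorm_add_le _ _).trans ?_
      calc frobNorm (H' * ΔW (m + 1)) + frobNorm ((H' - H) * W (m + 1))
          ≤ (Real.sqrt n * (L * β * M₁) * (1 + η) ^ (m + 1) * S) * (η * M₂) +
            (η * ((m : ℝ) + 1) * (Real.sqrt n * (L * β * M₁) * (1 + η) ^ (m + 1) * S)) * M₂ :=
            add_le_add e1 e2
        _ = Real.sqrt n * ((L * β * M₁) * (1 + η) ^ (m + 1) * S * (η * M₂) * ((m : ℝ) + 2)) := by
            ring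
    refine ⟨?_, ?_, ?_⟩
    · -- perturbation bound
      rw [houtdiff]
      have hy0 : 0 ≤ (L * β * M₁) * (1 + η) ^ (m + 1) * S * (η * M₂) * ((m : ℝ) + 2) :=
        mul_nonneg (mul_nonneg (mul_nonneg (mul_nonneg hLβM hpow1) hS0)
          (mul_nonneg hη0 hM2)) hm20
      refine (abs_readout_le _ c _ hy0 hsplitfrob).trans ?_
      calc (L * β * M₁) * (1 + η) ^ (m + 1) * S * (η * M₂) * ((m : ℝ) + 2)
          = (L * β * M₁ * S * (η * M₂) * ((m : ℝ) + 2)) * (1 + η) ^ (m + 1) := by ring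
        _ ≤ (L * β * M₁ * S * (η * M₂) * ((m : ℝ) + 2)) * Real.exp 1 := by
            apply mul_le_mul_of_nonneg_left hexpm1
              (mul_nonneg (mul_nonneg (mul_nonneg hLβM hS0) (mul_nonneg hη0 hM2)) hm20)
        _ = K := by rw [hKdef]; ring
    · -- bound on perturbed output
      have hfr : frobNorm (H' * (W (m + 1) + ΔW (m + 1))) ≤
          Real.sqrt n * (L * β * M₁ * S * M₂ * ((1 + η) ^ (m + 2))) := by
        refine (frobNorm_mul_le_right _ _).trans ?_
        have hWp : specNorm (W (m + 1) + ΔW (m + 1)) ≤ (1 + η) * M₂ := by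
          refine (specNorm_add_le _ _).trans ?_
          have := hW (m + 1) (by omega)
          have := hΔW' (m + 1) (by omega)
          linarith [mul_le_mul_of_nonneg_left (le_refl M₂) hη0]
        calc frobNorm H' * specNorm (W (m + 1) + ΔW (m + 1))
            ≤ (Real.sqrt n * (L * β * M₁) * (1 + η) ^ (m + 1) * S) * ((1 + η) * M₂) :=
              mul_le_mul hrep' hWp (specNorm_nonneg _) hR'0
          _ = Real.sqrt n * (L * β * M₁ * S * M₂ * ((1 + η) ^ (m + 2))) := by
              rw [pow_succ]; ring
      have hy0 : 0 ≤ L * β * M₁ * S * M₂ * ((1 + η) ^ (m + 2)) :=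
        mul_nonneg (mul_nonneg (mul_nonneg hLβM hS0) hM2)
          (pow_nonneg (by linarith) _)
      have habs : |(n : ℝ)⁻¹ * ∑ r, (H' * (W (m + 1) + ΔW (m + 1))) r c| ≤
          L * β * M₁ * S * M₂ * ((1 + η) ^ (m + 2)) := abs_readout_le _ c _ hy0 hfr
      have hout' : mpgnnOut d φ ρ ψ (fun k => W k + ΔW k) (fun k => U k + ΔU k)
          (Pfun G'.2) G'.1 (m + 2) c = (n : ℝ)⁻¹ * ∑ r, (H' * (W (m + 1) + ΔW (m + 1))) r c := rfl
      rw [hout']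
      refine habs.trans ?_
      calc L * β * M₁ * S * M₂ * ((1 + η) ^ (m + 2))
          ≤ L * β * M₁ * S * M₂ * Real.exp 1 := by
            apply mul_le_mul_of_nonneg_left hexp
              (mul_nonneg (mul_nonneg hLβM hS0) hM2)
        _ ≤ D0 := by
            rw [hD0def]
            have h9 : (0:ℝ) ≤ (Real.exp 1 * Real.exp 1 - Real.exp 1) * (L * β * M₁ * S * M₂) :=
              mul_nonneg (by nlinarith [hexp1]) (mul_nonneg (mul_nonneg hLβM hS0) hM2)
            nlinarith [h9]
    · -- bound on unperturbed output
      have hfr : frobNorm (H * W (m + 1)) ≤ Real.sqrt n * (L * β * M₁ * S * M₂) := by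
        refine (frobNorm_mul_le_right _ _).trans ?_
        calc frobNorm H * specNorm (W (m + 1))
            ≤ (Real.sqrt n * (L * β * M₁) * S) * M₂ :=
              mul_le_mul hrep (hW (m + 1) (by omega)) (specNorm_nonneg _)
                (mul_nonneg (mul_nonneg (Real.sqrt_nonneg _) hLβM) hS0)
          _ = Real.sqrt n * (L * β * M₁ * S * M₂) := by ring
      have hy0 : 0 ≤ L * β * M₁ * S * M₂ := mul_nonneg (mul_nonneg hLβM hS0) hM2
      have habs : |(n : ℝ)⁻¹ * ∑ r, (H * W (m + 1)) r c| ≤ L * β * M₁ * S * M₂ :=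
        abs_readout_le _ c _ hy0 hfr
      have hout : mpgnnOut d φ ρ ψ W U (Pfun G'.2) G'.1 (m + 2) c =
          (n : ℝ)⁻¹ * ∑ r, (H * W (m + 1)) r c := rfl
      rw [hout]
      refine habs.trans ?_
      rw [hD0def]
      have h9 : (0:ℝ) ≤ (Real.exp 1 * Real.exp 1 - 1) * (L * β * M₁ * S * M₂) :=
        mul_nonneg (by nlinarith [hexp1]) hy0
      nlinarith [h9]
  -- main bound via sInf comparison
  have hK0 : 0 ≤ K := by
    rw [hKdef]
    have : (0:ℝ) ≤ (m:ℝ) + 2 := by positivity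
    have he0 : (0:ℝ) ≤ Real.exp 1 := le_trans zero_le_one hexp1
    exact mul_nonneg (mul_nonneg (mul_nonneg (mul_nonneg (mul_nonneg (mul_nonneg
      (mul_nonneg he0 hη0) this) hL0) hβ0) hM1) hM2) hS0
  have main : |mpgnnRobustMarginPair (m + 2) d φ ρ ψ (fun k => W k + ΔW k)
      (fun k => U k + ΔU k) Pfun ε (X, A) i j -
      mpgnnRobustMarginPair (m + 2) d φ ρ ψ W U Pfun ε (X, A) i j| ≤ 2 * K := by
    unfold mpgnnRobustMarginPair
    apply abs_sInf_sub_sInf_le (attack ε (X, A)) ⟨(X, 0), mem0⟩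
      (fun G' => mpgnnOut d φ ρ ψ (fun k => W k + ΔW k) (fun k => U k + ΔU k)
        (Pfun G'.2) G'.1 (m + 2) i - mpgnnOut d φ ρ ψ (fun k => W k + ΔW k)
        (fun k => U k + ΔU k) (Pfun G'.2) G'.1 (m + 2) j)
      (fun G' => mpgnnOut d φ ρ ψ W U (Pfun G'.2) G'.1 (m + 2) i -
        mpgnnOut d φ ρ ψ W U (Pfun G'.2) G'.1 (m + 2) j) (2 * K) (2 * D0)
    · intro a ha
      obtain ⟨h1, _, _⟩ := hcore a ha i
      obtain ⟨h1', _, _⟩ := hcore a ha j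
      have hre : (mpgnnOut d φ ρ ψ (fun k => W k + ΔW k) (fun k => U k + ΔU k)
            (Pfun a.2) a.1 (m + 2) i - mpgnnOut d φ ρ ψ (fun k => W k + ΔW k)
            (fun k => U k + ΔU k) (Pfun a.2) a.1 (m + 2) j) -
          (mpgnnOut d φ ρ ψ W U (Pfun a.2) a.1 (m + 2) i -
            mpgnnOut d φ ρ ψ W U (Pfun a.2) a.1 (m + 2) j) =
          (mpgnnOut d φ ρ ψ (fun k => W k + ΔW k) (fun k => U k + ΔU k)
            (Pfun a.2) a.1 (m + 2) i - mpgnnOut d φ ρ ψ W U (Pfun a.2) a.1 (m + 2) i) -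
          (mpgnnOut d φ ρ ψ (fun k => W k + ΔW k) (fun k => U k + ΔU k)
            (Pfun a.2) a.1 (m + 2) j - mpgnnOut d φ ρ ψ W U (Pfun a.2) a.1 (m + 2) j) := by
        ring
      rw [hre]
      calc |_ - _| ≤ |_| + |_| := abs_sub_le_abs_add_abs _ _
        _ ≤ K + K := add_le_add h1 h1'
        _ = 2 * K := by ring
    · intro a ha
      obtain ⟨_, h2, _⟩ := hcore a ha i
      obtain ⟨_, h2', _⟩ := hcore a ha j
      linarith [(abs_le.mp h2).1, (abs_le.mp h2').2]
    · intro a ha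
      obtain ⟨_, _, h3⟩ := hcore a ha i
      obtain ⟨_, _, h3'⟩ := hcore a ha j
      linarith [(abs_le.mp h3).1, (abs_le.mp h3').2]
  constructor
  · intro hone
    have hSval : S = (m : ℝ) + 1 := by
      rw [hSdef, hone]
      simp
    refine main.trans ?_
    rw [hKdef, hSval]
    have hfac : 0 ≤ 2 * Real.exp 1 * η * L * β * M₁ * M₂ := by
      have he0 : (0:ℝ) ≤ Real.exp 1 := le_trans zero_le_one hexp1
      exact mul_nonneg (mul_nonneg (mul_nonneg (mul_nonneg (mul_nonneg
        (mul_nonneg (by norm_num) he0) hη0) hL0) hβ0) hM1) hM2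
    have hql : ((m:ℝ) + 2) * ((m:ℝ) + 1) ≤ ((m:ℝ) + 2 + 1) ^ 2 := by nlinarith
    calc 2 * (Real.exp 1 * η * ((m : ℝ) + 2) * L * β * M₁ * M₂ * ((m : ℝ) + 1))
        = (2 * Real.exp 1 * η * L * β * M₁ * M₂) * (((m:ℝ) + 2) * ((m:ℝ) + 1)) := by ring
      _ ≤ (2 * Real.exp 1 * η * L * β * M₁ * M₂) * (((m:ℝ) + 2 + 1) ^ 2) :=
          mul_le_mul_of_nonneg_left hql hfac
      _ = 2 * Real.exp 1 * η * L * β * M₁ * M₂ * (((m + 2 : ℕ) : ℝ) + 1) ^ 2 := by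
          push_cast; ring
  · intro hne
    have hSval : S = (τ ^ (m + 1) - 1) / (τ - 1) := by
      rw [hSdef]; exact geom_sum_eq hne (m + 1)
    refine main.trans (le_of_eq ?_)
    rw [hKdef, hSval]
    simp only [show m + 2 - 1 = m + 1 from rfl]
    push_cast
    ring

end
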